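/- With the reliability growth model below, the prior expectation of the residual system reliability after performing the set K of tasks satisfies E[ ∏_{i=1}^{I} r_i^{S_i} ] = ∏_{i=1}^{I} ( 1 − (1 − r_i) λ_i ∏_{j ∈ K} (1 − p_{i,j}) ), where S_i is the indicator that Z_i = 1 and B_{i,j} = 0 for all j ∈ K (i.e., concern i is a fault that no performed task detected). -/

import Mathlib

open MeasureTheory ProbabilityTheory

/-- With `I` concerns and `J` tasks, mutually independent `{0,1}`-valued (here
`Bool`-valued) random variables `Z i` (concern `i` is a fault, `P(Z i = 1) = λ i`) and
`B i j` (task `j` would detect concern `i` given that it is a fault,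
`P(B i j = 1) = p i j`), and a set `K` of performed tasks, the prior expectation of the
residual system reliability `∏_{i} r_i^{S_i}` — where `S_i` indicates that `Z_i = 1`
and `B_{i,j} = 0` for all `j ∈ K` — equals
`∏_{i} (1 − (1 − r_i) λ_i ∏_{j ∈ K} (1 − p_{i,j}))`. -/
theorem stmt8 {Ω : Type*} [MeasurableSpace Ω] (P : Measure Ω) [IsProbabilityMeasure P]
    (I J : ℕ) (Z : Fin I → Ω → Bool) (B : Fin I → Fin J → Ω → Bool)
    (hZmeas : ∀ i, Measurable (Z i)) (hBmeas : ∀ i j, Measurable (B i j))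
    (hindep : iIndepFun
      (Sum.elim Z (fun ij : Fin I × Fin J => B ij.1 ij.2)) P)
    (lam : Fin I → ℝ) (p : Fin I → Fin J → ℝ) (r : Fin I → ℝ)
    (hlam : ∀ i, lam i ∈ Set.Icc (0 : ℝ) 1) (hp : ∀ i j, p i j ∈ Set.Icc (0 : ℝ) 1)
    (hr : ∀ i, r i ∈ Set.Icc (0 : ℝ) 1)
    (hZ : ∀ i, P {ω | Z i ω = true} = ENNReal.ofReal (lam i))
    (hB : ∀ i j, P {ω | B i j ω = true} = ENNReal.ofReal (p i j))
    (K : Finset (Fin J)) :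
    (∫ ω, (∏ i, if Z i ω = true ∧ ∀ j ∈ K, B i j ω = false then r i else 1) ∂P) =
      ∏ i, (1 - (1 - r i) * lam i * ∏ j ∈ K, (1 - p i j)) := by
  classical
  set A : Fin I → Set Ω := fun i => {ω | Z i ω = true ∧ ∀ j ∈ K, B i j ω = false} with hA
  have hAmeas : ∀ i, MeasurableSet (A i) := by
    intro i
    have : A i = (Z i ⁻¹' {true}) ∩ ⋂ j ∈ K, (B i j ⁻¹' {false}) := by
      ext ω; simp [hA]
    rw [this]
    exact ((hZmeas i) (measurableSet_singleton _)).inter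
      (K.measurableSet_biInter fun j _ => (hBmeas i j) (measurableSet_singleton _))
  have key : ∀ T : Finset (Fin I), P (⋂ i ∈ T, A i) =
      ∏ i ∈ T, (ENNReal.ofReal (lam i) * ∏ j ∈ K, ENNReal.ofReal (1 - p i j)) := by
    intro T
    set s : (Fin I ⊕ Fin I × Fin J) → Set Ω :=
      Sum.elim (fun i => {ω | Z i ω = true}) (fun ij => {ω | B ij.1 ij.2 ω = false}) with hs
    set S : Finset (Fin I ⊕ Fin I × Fin J) :=
      T.image Sum.inl ∪ ((T ×ˢ K).image Sum.inr) with hS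
    have hmeas : ∀ k ∈ S, MeasurableSet[MeasurableSpace.comap
        (Sum.elim Z (fun ij : Fin I × Fin J => B ij.1 ij.2) k) inferInstance] (s k) := by
      rintro (i | ij) _
      · exact ⟨{true}, measurableSet_singleton _, by ext ω; simp [hs]⟩
      · exact ⟨{false}, measurableSet_singleton _, by ext ω; simp [hs]⟩
    have hmi := hindep.meas_biInter (S := S) (s := s) hmeas
    have hset : (⋂ i ∈ T, A i) = ⋂ k ∈ S, s k := by
      ext ω
      simp only [Set.mem_iInter, hS, Finset.mem_union, Finset.mem_image, Finset.mem_product,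
        hA, Set.mem_setOf_eq, hs]
      constructor
      · rintro h k hk
        obtain ⟨i', hi', rfl⟩ | ⟨ij', hij', rfl⟩ := hk
        · exact (h _ hi').1
        · exact (h _ hij'.1).2 _ hij'.2
      · intro h i hi
        refine ⟨h (Sum.inl i) (Or.inl ⟨i, hi, rfl⟩), fun j hj =>
          h (Sum.inr (i, j)) (Or.inr ⟨(i, j), ⟨hi, hj⟩, rfl⟩)⟩
    have hdisj : Disjoint (T.image Sum.inl) ((T ×ˢ K).image Sum.inr) := by
      simp [Finset.disjoint_left]
    rw [hset, hmi, hS, Finset.prod_union hdisj,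
      Finset.prod_image (fun a _ b _ h => Sum.inl_injective h),
      Finset.prod_image (fun a _ b _ h => Sum.inr_injective h),
      Finset.prod_product]
    rw [← Finset.prod_mul_distrib]
    refine Finset.prod_congr rfl fun i _ => ?_
    congr 1
    · exact hZ i
    · refine Finset.prod_congr rfl fun j _ => ?_
      have hc : {ω | B i j ω = false} = {ω | B i j ω = true}ᶜ := by ext ω; simp
      have hmt : MeasurableSet {ω | B i j ω = true} := (hBmeas i j) (measurableSet_singleton _)
      rw [show s (Sum.inr (i, j)) = {ω | B i j ω = false} from rfl, hc,
        measure_compl hmt (measure_ne_top _ _), hB i j, measure_univ,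
        ← ENNReal.ofReal_one, ← ENNReal.ofReal_sub _ (hp i j).1]
  have h1p : ∀ i j, (0:ℝ) ≤ 1 - p i j := fun i j => by linarith [(hp i j).2]
  have keyR : ∀ T : Finset (Fin I), (P (⋂ i ∈ T, A i)).toReal =
      ∏ i ∈ T, (lam i * ∏ j ∈ K, (1 - p i j)) := by
    intro T
    rw [key T, ENNReal.toReal_prod]
    refine Finset.prod_congr rfl fun i _ => ?_
    rw [ENNReal.toReal_mul, ENNReal.toReal_ofReal (hlam i).1, ENNReal.toReal_prod]
    congr 1
    exact Finset.prod_congr rfl fun j _ => ENNReal.toReal_ofReal (h1p i j)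
  have hpt : ∀ ω, (∏ i, if Z i ω = true ∧ ∀ j ∈ K, B i j ω = false then r i else 1)
      = ∑ T ∈ (Finset.univ : Finset (Fin I)).powerset,
          (∏ i ∈ T, (r i - 1)) * Set.indicator (⋂ i ∈ T, A i) (fun _ => (1:ℝ)) ω := by
    intro ω
    have h1 : ∀ i : Fin I, (if Z i ω = true ∧ ∀ j ∈ K, B i j ω = false then r i else 1)
        = (r i - 1) * Set.indicator (A i) (fun _ => (1:ℝ)) ω + 1 := by
      intro i
      by_cases h : ω ∈ A i
      · have hc : Z i ω = true ∧ ∀ j ∈ K, B i j ω = false := h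
        rw [Set.indicator_of_mem h, if_pos hc]; ring
      · have hc : ¬(Z i ω = true ∧ ∀ j ∈ K, B i j ω = false) := h
        rw [Set.indicator_of_notMem h, if_neg hc]; ring
    have hind : ∀ T : Finset (Fin I),
        ∏ i ∈ T, Set.indicator (A i) (fun _ => (1:ℝ)) ω
          = Set.indicator (⋂ i ∈ T, A i) (fun _ => (1:ℝ)) ω := by
      intro T
      by_cases h : ω ∈ ⋂ i ∈ T, A i
      · rw [Set.indicator_of_mem h]
        exact Finset.prod_eq_one fun i hi =>
          Set.indicator_of_mem (Set.mem_iInter₂.1 h i hi) _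
      · rw [Set.indicator_of_notMem h]
        rw [Set.mem_iInter₂] at h
        push_neg at h
        obtain ⟨i, hi, hω⟩ := h
        exact Finset.prod_eq_zero hi (Set.indicator_of_notMem hω _)
    calc (∏ i, if Z i ω = true ∧ ∀ j ∈ K, B i j ω = false then r i else 1)
        = ∏ i, ((r i - 1) * Set.indicator (A i) (fun _ => (1:ℝ)) ω + 1) :=
          Finset.prod_congr rfl fun i _ => h1 i
      _ = ∑ T ∈ (Finset.univ : Finset (Fin I)).powerset,
            (∏ i ∈ T, (r i - 1) * Set.indicator (A i) (fun _ => (1:ℝ)) ω)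
              * ∏ _i ∈ Finset.univ \ T, (1:ℝ) :=
          Finset.prod_add _ _ _
      _ = _ := by
          refine Finset.sum_congr rfl fun T _ => ?_
          rw [Finset.prod_const_one, mul_one, Finset.prod_mul_distrib, hind T]
  have hint : ∀ T : Finset (Fin I), Integrable (fun ω =>
      (∏ i ∈ T, (r i - 1)) * Set.indicator (⋂ i ∈ T, A i) (fun _ => (1:ℝ)) ω) P := by
    intro T
    exact ((integrable_const (1:ℝ)).indicator
      (T.measurableSet_biInter fun i _ => hAmeas i)).const_mul _
  calc (∫ ω, (∏ i, if Z i ω = true ∧ ∀ j ∈ K, B i j ω = false then r i else 1) ∂P)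
      = ∫ ω, ∑ T ∈ (Finset.univ : Finset (Fin I)).powerset,
          (∏ i ∈ T, (r i - 1)) * Set.indicator (⋂ i ∈ T, A i) (fun _ => (1:ℝ)) ω ∂P := by
        exact integral_congr_ae (Filter.Eventually.of_forall hpt)
    _ = ∑ T ∈ (Finset.univ : Finset (Fin I)).powerset,
          ∫ ω, (∏ i ∈ T, (r i - 1)) * Set.indicator (⋂ i ∈ T, A i) (fun _ => (1:ℝ)) ω ∂P :=
        integral_finset_sum _ fun T _ => hint T
    _ = ∑ T ∈ (Finset.univ : Finset (Fin I)).powerset,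
          ∏ i ∈ T, ((r i - 1) * (lam i * ∏ j ∈ K, (1 - p i j))) := by
        refine Finset.sum_congr rfl fun T _ => ?_
        rw [integral_const_mul _ _, integral_indicator_const (1:ℝ)
          (T.measurableSet_biInter fun i _ => hAmeas i), smul_eq_mul, mul_one, measureReal_def, keyR T,
          ← Finset.prod_mul_distrib]
    _ = ∏ i, (1 - (1 - r i) * lam i * ∏ j ∈ K, (1 - p i j)) := by
        rw [show (∏ i, (1 - (1 - r i) * lam i * ∏ j ∈ K, (1 - p i j)))
            = ∏ i, (((r i - 1) * (lam i * ∏ j ∈ K, (1 - p i j))) + 1) from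
          Finset.prod_congr rfl fun i _ => by ring]
        rw [Finset.prod_add]
        exact Finset.sum_congr rfl fun T _ => by
          rw [Finset.prod_const_one, mul_one]
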